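/- Let ε ≥ 0 and δ ∈ [0,1]. Define π₀ : ℕ → ℝ by π₀(0) = 0 and π₀(n+1) = min(e^ε·π₀(n) + δ, 1 − e^{−ε}·(1 − π₀(n) − δ), 1). If π : ℕ → [0,1] is any function with π(0) = 0 satisfying π(n+1) ≤ e^ε·π(n) + δ and 1 − π(n) ≤ e^ε·(1 − π(n+1)) + δ for all n, then π(n) ≤ π₀(n) for all n ∈ ℕ. -/
import Mathlib

open Real

theorem pi_opt_maximal
    (ε δ : ℝ) (hε : 0 ≤ ε) (hδ0 : 0 ≤ δ) (hδ1 : δ ≤ 1)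
    (π₀ : ℕ → ℝ) (h0 : π₀ 0 = 0)
    (hrec : ∀ n, π₀ (n + 1) =
      min (min (exp ε * π₀ n + δ) (1 - exp (-ε) * (1 - π₀ n - δ))) 1)
    (f : ℕ → ℝ) (hf0 : ∀ n, 0 ≤ f n) (hf1 : ∀ n, f n ≤ 1) (hfz : f 0 = 0)
    (hA : ∀ n, f (n + 1) ≤ exp ε * f n + δ)
    (hB : ∀ n, 1 - f n ≤ exp ε * (1 - f (n + 1)) + δ) :
    ∀ n, f n ≤ π₀ n := by
  intro n
  induction n with
  | zero => rw [h0, hfz]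
  | succ n ih =>
    rw [hrec n]
    have hexp : (0:ℝ) < exp ε := exp_pos ε
    have hexpn : (0:ℝ) < exp (-ε) := exp_pos (-ε)
    have h1 : f (n+1) ≤ exp ε * π₀ n + δ :=
      (hA n).trans (by nlinarith)
    have h2 : f (n+1) ≤ 1 - exp (-ε) * (1 - π₀ n - δ) := by
      have hB' := hB n
      have : exp (-ε) * (1 - f n - δ) ≤ 1 - f (n+1) := by
        have h3 : 1 - f n - δ ≤ exp ε * (1 - f (n+1)) := by linarith
        have := mul_le_mul_of_nonneg_left h3 hexpn.le
        rwa [← mul_assoc, ← exp_add, neg_add_cancel, exp_zero, one_mul] at this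
      nlinarith
    exact le_min (le_min h1 h2) (hf1 _)
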